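/- Fix m ≥ 2, qualities 1 ≥ η_1 > η_2 ≥ … ≥ η_m ≥ 0, parameters 1/2 < β ≤ e/(e+1), δ := ln(β/(1-β)) ∈ (0,1], and 0 ≤ 6μ ≤ δ². Let R_j^t be independent Bernoulli(η_j) random variables, W_j^0 = 1, W_j^{t+1} = ((1-μ)W_j^t + (μ/m)∑_k W_k^t)·β^{R_j^{t+1}}(1-β)^{1-R_j^{t+1}}, and P_j^t = W_j^t/∑_k W_k^t. Then for every T ≥ (ln m)/δ², the regret satisfies η_1 - (1/T)·∑_{t=1}^T ∑_{j=1}^m E[P_j^{t-1} R_j^t] ≤ ln m/(δT) + 2δ ≤ 3δ. -/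

import Mathlib

set_option maxHeartbeats 1000000

open MeasureTheory Finset ProbabilityTheory

theorem infinite_population_regret
    {Ω : Type*} [MeasurableSpace Ω] (Pr : Measure Ω) [IsProbabilityMeasure Pr]
    (m : ℕ) (hm : 2 ≤ m)
    (η : Fin m → ℝ) (hη1 : η ⟨0, by omega⟩ ≤ 1) (hη0 : ∀ j, 0 ≤ η j)
    (hηdec : ∀ i j : Fin m, i ≤ j → η j ≤ η i)
    (hgap : η ⟨1, by omega⟩ < η ⟨0, by omega⟩)
    (β μ δ : ℝ) (hβ : 1/2 < β) (hβ' : β ≤ Real.exp 1 / (Real.exp 1 + 1))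
    (hδ : δ = Real.log (β / (1 - β))) (hμ0 : 0 ≤ μ) (hμ : 6 * μ ≤ δ ^ 2)
    (R : ℕ × Fin m → Ω → ℝ)
    (hRmeas : ∀ p, Measurable (R p))
    (hRval : ∀ p ω, R p ω = 0 ∨ R p ω = 1)
    (hRbern : ∀ p, Pr {ω | R p ω = 1} = ENNReal.ofReal (η p.2))
    (hindep : iIndepFun R Pr)
    (W : ℕ → Fin m → Ω → ℝ)
    (hW0 : ∀ j ω, W 0 j ω = 1)
    (hupd : ∀ t j ω, W (t + 1) j ω =
      ((1 - μ) * W t j ω + (μ / m) * ∑ k, W t k ω) *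
        Real.rpow β (R (t + 1, j) ω) * Real.rpow (1 - β) (1 - R (t + 1, j) ω))
    (P : ℕ → Fin m → Ω → ℝ)
    (hP : ∀ t j ω, P t j ω = W t j ω / ∑ k, W t k ω)
    (T : ℕ) (hT : Real.log m / δ ^ 2 ≤ T) :
    η ⟨0, by omega⟩ - (1 / T) * ∑ t ∈ Finset.Icc 1 T, ∑ j,
        ∫ ω, P (t - 1) j ω * R (t, j) ω ∂Pr
      ≤ Real.log m / (δ * T) + 2 * δ ∧
    η ⟨0, by omega⟩ - (1 / T) * ∑ t ∈ Finset.Icc 1 T, ∑ j,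
        ∫ ω, P (t - 1) j ω * R (t, j) ω ∂Pr
      ≤ 3 * δ := by
  classical
  set j0 : Fin m := ⟨0, by omega⟩ with hj0
  have hmpos : (0:ℝ) < m := by exact_mod_cast (by omega : 0 < m)
  have he1 : (0:ℝ) < Real.exp 1 := Real.exp_pos 1
  have hβ1 : β < 1 := lt_of_le_of_lt hβ' (by rw [div_lt_one (by positivity)]; linarith)
  have h1β : (0:ℝ) < 1 - β := by linarith
  have hβ0 : (0:ℝ) < β := by linarith
  have hδpos : 0 < δ := hδ ▸ Real.log_pos ((one_lt_div h1β).2 (by linarith))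
  have hδ1 : δ ≤ 1 := by
    have h := (le_div_iff₀ (by positivity : (0:ℝ) < Real.exp 1 + 1)).1 hβ'
    rw [hδ, Real.log_le_iff_le_exp (by positivity), div_le_iff₀ h1β]
    nlinarith
  have hμ6 : μ ≤ 1/6 := by nlinarith
  have h1μ : (0:ℝ) < 1 - μ := by linarith
  have hexpδ : Real.exp δ = β / (1 - β) := by rw [hδ, Real.exp_log (by positivity)]
  have hR0 : ∀ p ω, 0 ≤ R p ω := by
    intro p ω; rcases hRval p ω with h | h <;> rw [h] <;> norm_num
  have hR1 : ∀ p ω, R p ω ≤ 1 := by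
    intro p ω; rcases hRval p ω with h | h <;> rw [h] <;> norm_num
  -- rewrite the update with exp
  have hmulti : ∀ t j ω, W (t+1) j ω =
      ((1-μ) * W t j ω + (μ/m) * ∑ k, W t k ω) * ((1-β) * Real.exp (δ * R (t+1,j) ω)) := by
    intro t j ω
    rw [hupd]
    rcases hRval (t+1, j) ω with h | h <;> rw [h]
    · norm_num [Real.rpow_natCast]
    · norm_num [Real.rpow_natCast, hexpδ]
      field_simp
      simp
  have hexplin : ∀ p ω, Real.exp (δ * R p ω) = 1 + (Real.exp δ - 1) * R p ω := by
    intro p ω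
    rcases hRval p ω with h | h <;> rw [h] <;> simp
  -- positivity of weights
  have hWpos : ∀ t j ω, 0 < W t j ω := by
    intro t
    induction t with
    | zero => intro j ω; rw [hW0]; norm_num
    | succ t ih =>
      intro j ω
      rw [hmulti]
      have hs : (0:ℝ) ≤ ∑ k, W t k ω := Finset.sum_nonneg fun k _ => (ih k ω).le
      have hw := ih j ω
      have h2 : (0:ℝ) < (1-μ) * W t j ω + (μ/m) * ∑ k, W t k ω := by positivity
      positivity
  have hSpos : ∀ t ω, (0:ℝ) < ∑ k, W t k ω :=
    fun t ω => Finset.sum_pos (fun k _ => hWpos t k ω) ⟨j0, Finset.mem_univ _⟩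
  have hPnonneg : ∀ t j ω, 0 ≤ P t j ω := by
    intro t j ω; rw [hP]; exact div_nonneg (hWpos t j ω).le (hSpos t ω).le
  have hPle1 : ∀ t j ω, P t j ω ≤ 1 := by
    intro t j ω; rw [hP, div_le_one (hSpos t ω)]
    exact Finset.single_le_sum (fun k _ => (hWpos t k ω).le) (Finset.mem_univ j)
  have hPsum : ∀ t ω, ∑ j, P t j ω = 1 := by
    intro t ω
    simp only [hP]
    rw [← Finset.sum_div, div_self (hSpos t ω).ne']
  -- the per-round gain
  set X : ℕ → Ω → ℝ := fun t ω => ∑ j, ((1-μ) * P t j ω + μ/m) * R (t+1, j) ω with hX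
  have hXnonneg : ∀ t ω, 0 ≤ X t ω := by
    intro t ω
    refine Finset.sum_nonneg fun j _ => mul_nonneg ?_ (hR0 _ ω)
    have := hPnonneg t j ω
    positivity
  have hc0 : (0:ℝ) ≤ Real.exp δ - 1 := by
    have := Real.add_one_le_exp δ; linarith
  -- recursion for the total weight
  have hSrec : ∀ t ω, ∑ k, W (t+1) k ω =
      ((1-β) * ∑ k, W t k ω) * (1 + (Real.exp δ - 1) * X t ω) := by
    intro t ω
    have hQ : ∀ j : Fin m, (1-μ) * W t j ω + (μ/m) * ∑ k, W t k ω
        = (∑ k, W t k ω) * ((1-μ) * P t j ω + μ/m) := by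
      intro j
      rw [hP]
      field_simp [(hSpos t ω).ne']
    have hQsum : ∑ j, ((1-μ) * P t j ω + μ/m) = 1 := by
      rw [Finset.sum_add_distrib, ← Finset.mul_sum, hPsum, Finset.sum_const,
        Finset.card_univ, Fintype.card_fin, nsmul_eq_mul]
      field_simp
      ring
    calc ∑ k, W (t+1) k ω
        = ∑ k, ((1-β) * ∑ i, W t i ω) *
            (((1-μ) * P t k ω + μ/m) + (Real.exp δ - 1) * (((1-μ) * P t k ω + μ/m) * R (t+1,k) ω)) := by
          refine Finset.sum_congr rfl fun k _ => ?_
          rw [hmulti, hexplin, hQ]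
          ring
      _ = ((1-β) * ∑ i, W t i ω) *
            ((∑ k, ((1-μ) * P t k ω + μ/m)) + (Real.exp δ - 1) * ∑ k, ((1-μ) * P t k ω + μ/m) * R (t+1,k) ω) := by
          rw [← Finset.mul_sum, Finset.sum_add_distrib, ← Finset.mul_sum]
      _ = ((1-β) * ∑ k, W t k ω) * (1 + (Real.exp δ - 1) * X t ω) := by
          rw [hQsum, hX]
  -- upper bound on log of total weight
  have hupper : ∀ n ω, Real.log (∑ k, W n k ω) ≤
      Real.log m + n * Real.log (1-β) + (Real.exp δ - 1) * ∑ t ∈ Finset.range n, X t ω := by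
    intro n ω
    induction n with
    | zero =>
      simp [hW0]
    | succ n ih =>
      have h1 : (0:ℝ) < 1 + (Real.exp δ - 1) * X n ω := by
        have := hXnonneg n ω; nlinarith
      have hlog : Real.log (∑ k, W (n+1) k ω) =
          Real.log (1-β) + Real.log (∑ k, W n k ω) + Real.log (1 + (Real.exp δ - 1) * X n ω) := by
        rw [hSrec, Real.log_mul (mul_pos h1β (hSpos n ω)).ne' h1.ne', Real.log_mul h1β.ne' (hSpos n ω).ne']
      have h2 : Real.log (1 + (Real.exp δ - 1) * X n ω) ≤ (Real.exp δ - 1) * X n ω := by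
        have := Real.log_le_sub_one_of_pos h1; linarith
      rw [Finset.sum_range_succ]
      push_cast
      linarith
  -- lower bound on log of best expert weight
  have hlow : ∀ n ω, n * (Real.log (1-μ) + Real.log (1-β)) + δ * ∑ t ∈ Finset.range n, R (t+1, j0) ω
      ≤ Real.log (W n j0 ω) := by
    intro n ω
    induction n with
    | zero => simp [hW0]
    | succ n ih =>
      have hstep : (1-μ) * W n j0 ω * ((1-β) * Real.exp (δ * R (n+1, j0) ω)) ≤ W (n+1) j0 ω := by
        rw [hmulti]
        have hs : (0:ℝ) ≤ (μ/m) * ∑ k, W n k ω := by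
          have := (hSpos n ω).le; positivity
        have hpos : (0:ℝ) < (1-β) * Real.exp (δ * R (n+1, j0) ω) := by positivity
        nlinarith
      have hW := hWpos n j0 ω
      have hlogle := Real.log_le_log (by positivity) hstep
      rw [Real.log_mul (by positivity) (by positivity), Real.log_mul (by positivity) hW.ne',
        Real.log_mul h1β.ne' (Real.exp_ne_zero _), Real.log_exp] at hlogle
      rw [Finset.sum_range_succ]
      push_cast
      linarith
  -- pointwise master inequality
  have hmaster : ∀ ω, δ * ∑ t ∈ Finset.range T, R (t+1, j0) ω ≤
      Real.log m + (Real.exp δ - 1) * ∑ t ∈ Finset.range T, X t ω - T * Real.log (1-μ) := by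
    intro ω
    have h1 := hupper T ω
    have h2 := hlow T ω
    have h3 : Real.log (W T j0 ω) ≤ Real.log (∑ k, W T k ω) :=
      Real.log_le_log (hWpos T j0 ω)
        (Finset.single_le_sum (fun k _ => (hWpos T k ω).le) (Finset.mem_univ j0))
    linarith
  -- measurability
  have hWmeas : ∀ t j, Measurable (fun ω => W t j ω) := by
    intro t
    induction t with
    | zero => intro j; simp only [hW0]; exact measurable_const
    | succ t ih =>
      intro j
      have hs : Measurable (fun ω => ∑ k, W t k ω) :=
        Finset.measurable_sum _ fun k _ => ih k
      have : (fun ω => W (t+1) j ω) = fun ω =>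
          ((1-μ) * W t j ω + (μ/m) * ∑ k, W t k ω) * ((1-β) * Real.exp (δ * R (t+1,j) ω)) :=
        funext (hmulti t j)
      rw [this]
      exact (((ih j).const_mul _).add (hs.const_mul _)).mul
        ((((hRmeas _).const_mul δ).exp).const_mul _)
  have hSmeas : ∀ t, Measurable (fun ω => ∑ k, W t k ω) :=
    fun t => Finset.measurable_sum _ fun k _ => hWmeas t k
  have hPmeas : ∀ t j, Measurable (fun ω => P t j ω) := by
    intro t j
    have : (fun ω => P t j ω) = fun ω => W t j ω / ∑ k, W t k ω := funext (hP t j)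
    rw [this]
    exact (hWmeas t j).div (hSmeas t)
  -- integrals of rewards
  have hRintegral : ∀ p, ∫ ω, R p ω ∂Pr = η p.2 := by
    intro p
    have hset : MeasurableSet {ω | R p ω = 1} := hRmeas p (measurableSet_singleton 1)
    have heq : (fun ω => R p ω) = Set.indicator {ω | R p ω = 1} (fun _ => (1:ℝ)) := by
      funext ω
      by_cases h : R p ω = 1
      · simp [Set.indicator_apply, Set.mem_setOf_eq, h]
      · have h0 : R p ω = 0 := (hRval p ω).resolve_right h
        simp [Set.indicator_apply, Set.mem_setOf_eq, h, h0]
    rw [heq, integral_indicator_const (1:ℝ) hset, measureReal_def, hRbern, smul_eq_mul, mul_one,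
      ENNReal.toReal_ofReal (hη0 _)]
  have hRintble : ∀ p, Integrable (R p) Pr := by
    intro p
    refine (integrable_const (1:ℝ)).mono' (hRmeas p).aestronglyMeasurable ?_
    filter_upwards with ω
    rw [Real.norm_eq_abs, abs_of_nonneg (hR0 p ω)]
    exact hR1 p ω
  have hPRintble : ∀ t j, Integrable (fun ω => P t j ω * R (t+1, j) ω) Pr := by
    intro t j
    refine (integrable_const (1:ℝ)).mono'
      ((hPmeas t j).mul (hRmeas _)).aestronglyMeasurable ?_
    filter_upwards with ω
    rw [Real.norm_eq_abs, abs_of_nonneg (mul_nonneg (hPnonneg t j ω) (hR0 _ ω))]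
    calc P t j ω * R (t+1,j) ω ≤ 1 * 1 :=
      mul_le_mul (hPle1 t j ω) (hR1 _ ω) (hR0 _ ω) zero_le_one
    _ = 1 := mul_one 1
  have hQRintble : ∀ t j, Integrable (fun ω => ((1-μ) * P t j ω + μ/m) * R (t+1,j) ω) Pr := by
    intro t j
    have : (fun ω => ((1-μ) * P t j ω + μ/m) * R (t+1,j) ω) =
        fun ω => (1-μ) * (P t j ω * R (t+1,j) ω) + (μ/m) * R (t+1,j) ω := by
      funext ω; ring
    rw [this]
    exact (((hPRintble t j).const_mul _).add ((hRintble _).const_mul _))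
  have hXintble : ∀ t, Integrable (X t) Pr := by
    intro t
    have : X t = fun ω => ∑ j, ((1-μ) * P t j ω + μ/m) * R (t+1,j) ω := rfl
    rw [this]
    exact integrable_finset_sum _ fun j _ => hQRintble t j
  -- the abbreviation for the average reward
  set B : ℝ := ∑ t ∈ Finset.range T, ∑ j, ∫ ω, P t j ω * R (t+1, j) ω ∂Pr with hB
  -- X integral
  have hXint : ∀ t, ∫ ω, X t ω ∂Pr =
      (1-μ) * (∑ j, ∫ ω, P t j ω * R (t+1,j) ω ∂Pr) + (μ/m) * ∑ j, η j := by
    intro t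
    rw [show (fun ω => X t ω) = fun ω => ∑ j, ((1-μ) * P t j ω + μ/m) * R (t+1,j) ω from rfl]
    rw [integral_finset_sum _ fun j _ => hQRintble t j]
    have : ∀ j : Fin m, ∫ ω, ((1-μ) * P t j ω + μ/m) * R (t+1,j) ω ∂Pr =
        (1-μ) * (∫ ω, P t j ω * R (t+1,j) ω ∂Pr) + (μ/m) * η j := by
      intro j
      have heq : (fun ω => ((1-μ) * P t j ω + μ/m) * R (t+1,j) ω) =
          fun ω => (1-μ) * (P t j ω * R (t+1,j) ω) + (μ/m) * R (t+1,j) ω := by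
        funext ω; ring
      rw [heq, integral_add ((hPRintble t j).const_mul _) ((hRintble _).const_mul _),
        integral_const_mul, integral_const_mul, hRintegral]
    rw [Finset.sum_congr rfl fun j _ => this j, Finset.sum_add_distrib,
      ← Finset.mul_sum, ← Finset.mul_sum]
  -- integrate the master inequality
  have hkey : δ * (T * η j0) ≤
      Real.log m + (Real.exp δ - 1) * ((1-μ) * B + T * ((μ/m) * ∑ j, η j)) - T * Real.log (1-μ) := by
    have hf : Integrable (fun ω => δ * ∑ t ∈ Finset.range T, R (t+1, j0) ω) Pr :=
      (integrable_finset_sum _ fun t _ => hRintble _).const_mul δ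
    have hXS : Integrable (fun ω => (Real.exp δ - 1) * ∑ t ∈ Finset.range T, X t ω) Pr :=
      (integrable_finset_sum _ fun t _ => hXintble t).const_mul _
    have hgadd : Integrable (fun ω =>
        Real.log m + (Real.exp δ - 1) * ∑ t ∈ Finset.range T, X t ω) Pr :=
      (integrable_const _).add hXS
    have hg : Integrable (fun ω =>
        Real.log m + (Real.exp δ - 1) * ∑ t ∈ Finset.range T, X t ω - T * Real.log (1-μ)) Pr :=
      hgadd.sub (integrable_const _)
    have hmono := integral_mono hf hg (fun ω => hmaster ω)
    rw [integral_const_mul, integral_finset_sum _ fun t _ => hRintble _] at hmono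
    rw [integral_sub hgadd (integrable_const _),
      integral_add (integrable_const _) hXS,
      integral_const_mul, integral_finset_sum _ fun t _ => hXintble t,
      integral_const, integral_const] at hmono
    simp only [probReal_univ, measure_univ, ENNReal.toReal_one, smul_eq_mul, one_mul] at hmono
    have hRsum : ∑ t ∈ Finset.range T, ∫ ω, R (t+1, j0) ω ∂Pr = T * η j0 := by
      rw [Finset.sum_congr rfl fun t _ => hRintegral (t+1, j0)]
      simp [Finset.sum_const, Finset.card_range, nsmul_eq_mul]
    have hXsum : ∑ t ∈ Finset.range T, ∫ ω, X t ω ∂Pr =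
        (1-μ) * B + T * ((μ/m) * ∑ j, η j) := by
      rw [Finset.sum_congr rfl fun t _ => hXint t, Finset.sum_add_distrib,
        ← Finset.mul_sum, ← hB, Finset.sum_const, Finset.card_range, nsmul_eq_mul]
    rw [hRsum, hXsum] at hmono
    linarith
  -- bounds on B
  have hB0 : 0 ≤ B := by
    refine Finset.sum_nonneg fun t _ => Finset.sum_nonneg fun j _ => ?_
    exact integral_nonneg fun ω => mul_nonneg (hPnonneg t j ω) (hR0 _ ω)
  have hBT : B ≤ T := by
    have h1 : ∀ t, ∑ j, ∫ ω, P t j ω * R (t+1,j) ω ∂Pr ≤ 1 := by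
      intro t
      have hPint : ∀ j : Fin m, Integrable (fun ω => P t j ω) Pr := by
        intro j
        refine (integrable_const (1:ℝ)).mono' (hPmeas t j).aestronglyMeasurable ?_
        filter_upwards with ω
        rw [Real.norm_eq_abs, abs_of_nonneg (hPnonneg t j ω)]
        exact hPle1 t j ω
      calc ∑ j, ∫ ω, P t j ω * R (t+1,j) ω ∂Pr
          ≤ ∑ j, ∫ ω, P t j ω ∂Pr := by
            refine Finset.sum_le_sum fun j _ => ?_
            refine integral_mono (hPRintble t j) (hPint j) fun ω => ?_
            calc P t j ω * R (t+1,j) ω ≤ P t j ω * 1 :=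
              mul_le_mul_of_nonneg_left (hR1 _ ω) (hPnonneg t j ω)
            _ = P t j ω := mul_one _
        _ = ∫ ω, ∑ j, P t j ω ∂Pr := (integral_finset_sum _ fun j _ => hPint j).symm
        _ = 1 := by
            rw [show (fun ω => ∑ j, P t j ω) = fun _ => (1:ℝ) from funext fun ω => hPsum t ω]
            simp
    calc B ≤ ∑ t ∈ Finset.range T, (1:ℝ) := Finset.sum_le_sum fun t _ => h1 t
    _ = T := by rw [Finset.sum_const, Finset.card_range, nsmul_eq_mul, mul_one]
  -- basic scalar facts for the final arithmetic
  have hlogm : 0 < Real.log m := Real.log_pos (by exact_mod_cast (by omega : 1 < m))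
  have hT1 : (1:ℝ) ≤ T := by
    have hTpos' : (0:ℝ) < T := lt_of_lt_of_le (by positivity) hT
    have : T ≠ 0 := by
      intro h; rw [h] at hTpos'; norm_num at hTpos'
    exact_mod_cast (by omega : 1 ≤ T)
  have hTpos : (0:ℝ) < T := by linarith
  have hexpquad : Real.exp δ - 1 ≤ δ + δ^2 := by
    have := Real.abs_exp_sub_one_sub_id_le (x := δ) (by rw [abs_of_nonneg hδpos.le]; exact hδ1)
    have := abs_le.1 this
    linarith [this.2]
  have hexp2 : Real.exp δ - 1 ≤ 2 := by
    have h1 : Real.exp δ ≤ Real.exp 1 := Real.exp_le_exp.2 hδ1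
    have := Real.exp_one_lt_d9
    linarith
  have hlog1μ : -Real.log (1-μ) ≤ 2 * μ := by
    have h1 : Real.exp (-(2*μ)) ≤ 1 - μ := by
      rw [Real.exp_neg]
      rw [inv_le_comm₀ (Real.exp_pos _) h1μ]
      calc (1-μ)⁻¹ ≤ 1 + 2*μ := by
            rw [inv_le_iff_one_le_mul₀ h1μ]
            nlinarith
      _ ≤ Real.exp (2*μ) := by linarith [Real.add_one_le_exp (2*μ)]
    have h2 := Real.log_le_log (Real.exp_pos _) h1
    rw [Real.log_exp] at h2
    linarith
  have hsumη : ∑ j, η j ≤ m := by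
    calc ∑ j, η j ≤ ∑ _j : Fin m, (1:ℝ) := by
          refine Finset.sum_le_sum fun j _ => ?_
          calc η j ≤ η j0 := hηdec j0 j (by simp [hj0, Fin.le_def])
          _ ≤ 1 := hη1
    _ = m := by simp
  have hμ' : (μ/m) * ∑ j, η j ≤ μ := by
    calc (μ/m) * ∑ j, η j ≤ (μ/m) * m := by
          refine mul_le_mul_of_nonneg_left hsumη (by positivity)
    _ = μ := by field_simp
  have hμ'0 : 0 ≤ (μ/m) * ∑ j, η j := by
    refine mul_nonneg (by positivity) (Finset.sum_nonneg fun j _ => hη0 j)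
  -- the main quantitative inequality
  have hmain : δ * (T * η j0) - δ * B ≤ Real.log m + 2 * δ^2 * T := by
    have hc2 : (Real.exp δ - 1) * ((1-μ) * B + T * ((μ/m) * ∑ j, η j)) ≤
        δ * B + δ^2 * T + 2 * μ * T := by
      have h1 : (1-μ) * B ≤ B := by nlinarith
      have h2 : (Real.exp δ - 1) * ((1-μ) * B) ≤ (δ + δ^2) * B := by
        have : (0:ℝ) ≤ (1-μ) * B := by positivity
        nlinarith
      have h3 : (Real.exp δ - 1) * (T * ((μ/m) * ∑ j, η j)) ≤ 2 * (T * μ) := by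
        have : (0:ℝ) ≤ T * ((μ/m) * ∑ j, η j) := by positivity
        nlinarith
      nlinarith
    have h4 : -(T : ℝ) * Real.log (1-μ) ≤ 2 * μ * T := by nlinarith
    have h5 : 4 * μ * T ≤ δ^2 * T := by nlinarith
    nlinarith [hkey]
  -- identify the goal sum with B
  have hgoal : ∑ t ∈ Finset.Icc 1 T, ∑ j, ∫ ω, P (t-1) j ω * R (t, j) ω ∂Pr = B := by
    rw [hB, ← Finset.Ico_add_one_right_eq_Icc, Finset.sum_Ico_eq_sum_range]
    refine Finset.sum_congr (by rw [Nat.add_sub_cancel]) fun t _ => ?_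
    rw [show 1 + t = t + 1 from Nat.add_comm 1 t]
    norm_num
  rw [hgoal]
  have goal1 : η j0 - (1 / T) * B ≤ Real.log m / (δ * T) + 2 * δ := by
    have h2 : η j0 - (1/T) * B = (δ * (T * η j0) - δ * B) / (δ * T) := by
      field_simp
    have h3 : Real.log m / (δ * T) + 2 * δ = (Real.log m + 2 * δ^2 * T) / (δ * T) := by
      field_simp
    rw [h2, h3]
    gcongr
  have goal2 : η j0 - (1 / T) * B ≤ 3 * δ := by
    have h1 : Real.log m / (δ * T) ≤ δ := by
      rw [div_le_iff₀ (by positivity)]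
      rw [div_le_iff₀ (by positivity)] at hT
      nlinarith
    linarith
  exact ⟨goal1, goal2⟩
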